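/- Fix 1 < p, q < ∞ with 1/p + 1/q = 1 and r ∈ ℕ, r ≥ 2. Then for every finitely supported real sequence x, (1/3)·|x|_{p,r} ≤ ‖x‖_{p,r} ≤ |x|_{p,r}, where ‖x‖_{p,r} = sup{⟨x,z⟩ : z ∈ K_{q,r}} and |x|_{p,r} = sup{⟨x,y⟩ : y ∈ K^M_{q,r}}. -/

import Mathlib

open scoped BigOperators

def TsirelsonClosed (q : ℝ) (r : ℕ) (S : Set (ℕ →₀ ℝ)) : Prop :=
  (∀ n : ℕ, Finsupp.single n 1 ∈ S ∧ Finsupp.single n (-1) ∈ S) ∧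
  ∀ (l : ℕ) (z : Fin l → ℕ →₀ ℝ), 1 ≤ l → l ≤ r → (∀ i, z i ∈ S) →
    (∀ i j : Fin l, i < j → ∀ a ∈ (z i).support, ∀ b ∈ (z j).support, a < b) →
    ((r : ℝ) ^ (-(1 / q) : ℝ)) • (∑ i, z i) ∈ S

def TsirelsonModClosed (q : ℝ) (r : ℕ) (S : Set (ℕ →₀ ℝ)) : Prop :=
  (∀ n : ℕ, Finsupp.single n 1 ∈ S ∧ Finsupp.single n (-1) ∈ S) ∧
  ∀ (l : ℕ) (z : Fin l → ℕ →₀ ℝ), 1 ≤ l → l ≤ r → (∀ i, z i ∈ S) →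
    (∀ i j : Fin l, i ≠ j → Disjoint (z i).support (z j).support) →
    ((r : ℝ) ^ (-(1 / q) : ℝ)) • (∑ i, z i) ∈ S

def Kqr (q : ℝ) (r : ℕ) : Set (ℕ →₀ ℝ) := ⋂₀ {S | TsirelsonClosed q r S}

def KMqr (q : ℝ) (r : ℕ) : Set (ℕ →₀ ℝ) := ⋂₀ {S | TsirelsonModClosed q r S}

/-- The classical Tsirelson-type norm `‖x‖_{p,r} = sup {⟨x,z⟩ : z ∈ K_{q,r}}`. -/
noncomputable def classicalNorm (q : ℝ) (r : ℕ) (x : ℕ →₀ ℝ) : ℝ :=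
  sSup ((fun z => ∑ i ∈ x.support, x i * z i) '' Kqr q r)

/-- The modified Tsirelson-type norm `|x|_{p,r} = sup {⟨x,y⟩ : y ∈ K^M_{q,r}}`. -/
noncomputable def modifiedNorm (q : ℝ) (r : ℕ) (x : ℕ →₀ ℝ) : ℝ :=
  sSup ((fun y => ∑ i ∈ x.support, x i * y i) '' KMqr q r)

/-! ### Basic facts -/

noncomputable def tho (q : ℝ) (r : ℕ) : ℝ := (r : ℝ) ^ (-(1 / q) : ℝ)

lemma tho_pos (q : ℝ) (r : ℕ) (hr : 2 ≤ r) : 0 < tho q r := by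
  apply Real.rpow_pos_of_pos
  exact_mod_cast Nat.lt_of_lt_of_le (by norm_num) hr

lemma tho_le_one (q : ℝ) (r : ℕ) (hq : 1 < q) (hr : 2 ≤ r) : tho q r ≤ 1 := by
  apply Real.rpow_le_one_of_one_le_of_nonpos
  · have h2 : (2:ℝ) ≤ (r:ℝ) := by exact_mod_cast hr
    linarith
  · have : 0 < q := lt_trans one_pos hq
    have : 0 ≤ 1 / q := by positivity
    linarith

lemma modclosed_is_closed (q : ℝ) (r : ℕ) (S : Set (ℕ →₀ ℝ))
    (h : TsirelsonModClosed q r S) : TsirelsonClosed q r S := by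
  refine ⟨h.1, fun l z h1 h2 h3 hsucc => h.2 l z h1 h2 h3 ?_⟩
  intro i j hij
  rcases lt_or_gt_of_ne hij with hlt | hgt
  · exact Finset.disjoint_left.2 fun a ha ha' =>
      lt_irrefl a (hsucc i j hlt a ha a ha')
  · exact Finset.disjoint_right.2 fun a ha ha' =>
      lt_irrefl a (hsucc j i hgt a ha a ha')

lemma Kqr_subset_KMqr (q : ℝ) (r : ℕ) : Kqr q r ⊆ KMqr q r := by
  intro z hz S hS
  exact hz S (modclosed_is_closed q r S hS)

lemma mem_Kqr_iff (q : ℝ) (r : ℕ) (z : ℕ →₀ ℝ) :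
    z ∈ Kqr q r ↔ ∀ S, TsirelsonClosed q r S → z ∈ S := Set.mem_sInter

lemma Kqr_closed (q : ℝ) (r : ℕ) : TsirelsonClosed q r (Kqr q r) := by
  constructor
  · intro n
    exact ⟨fun S hS => (hS.1 n).1, fun S hS => (hS.1 n).2⟩
  · intro l z h1 h2 h3 h4 S hS
    exact hS.2 l z h1 h2 (fun i => h3 i S hS) h4

lemma single_mem_Kqr (q : ℝ) (r : ℕ) (n : ℕ) (c : ℝ) (hc : c = 1 ∨ c = -1) :
    Finsupp.single n c ∈ Kqr q r := by
  rcases hc with h | h <;> subst h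
  · exact ((Kqr_closed q r).1 n).1
  · exact ((Kqr_closed q r).1 n).2

/-! ### The representation of elements of `KMqr` -/

/-- `KMRep q r y` : `y` is of the form `∑ i ∈ F, ±θ^(d i) e_i` with Kraft sum `≤ 1`. -/
def KMRep (q : ℝ) (r : ℕ) (y : ℕ →₀ ℝ) : Prop :=
  ∃ (F : Finset ℕ) (d : ℕ → ℕ) (σ : ℕ → ℝ),
    (∀ i ∈ F, σ i = 1 ∨ σ i = -1) ∧
    (∑ i ∈ F, ((r : ℝ) ^ (d i))⁻¹) ≤ 1 ∧
    y = ∑ i ∈ F, Finsupp.single i (σ i * tho q r ^ (d i))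

lemma sum_single_apply (F : Finset ℕ) (c : ℕ → ℝ) (k : ℕ) :
    (∑ i ∈ F, Finsupp.single i (c i) : ℕ →₀ ℝ) k = if k ∈ F then c k else 0 := by
  rw [Finsupp.finset_sum_apply]
  simp [Finsupp.single_apply, Finset.sum_ite_eq' F k c]

lemma sum_single_support (F : Finset ℕ) (c : ℕ → ℝ) :
    (∑ i ∈ F, Finsupp.single i (c i) : ℕ →₀ ℝ).support ⊆ F := by
  intro k hk
  rw [Finsupp.mem_support_iff, sum_single_apply] at hk
  by_contra h
  simp [h] at hk


lemma KMRep_modclosed (q : ℝ) (r : ℕ) (hq : 1 < q) (hr : 2 ≤ r) :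
    TsirelsonModClosed q r {y | KMRep q r y} := by
  have hθ : 0 < tho q r := tho_pos q r hr
  have hrpos : (0:ℝ) < (r:ℝ) := by
    have : (2:ℝ) ≤ (r:ℝ) := by exact_mod_cast hr
    linarith
  constructor
  · intro n
    constructor
    · refine ⟨{n}, fun _ => 0, fun _ => 1, by simp, by simp, by simp⟩
    · refine ⟨{n}, fun _ => 0, fun _ => -1, by simp, by simp, by simp⟩
  · rintro l z hl1 hlr hz hdisj
    choose F d σ hσ hkraft hrepr using fun j => (hz j)
    -- supports equal F j
    have hsupp : ∀ j, (z j).support = F j := by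
      intro j
      apply Finset.Subset.antisymm
      · intro k hk
        rw [Finsupp.mem_support_iff, hrepr j, sum_single_apply] at hk
        by_contra h; simp [h] at hk
      · intro k hk
        rw [Finsupp.mem_support_iff, hrepr j, sum_single_apply, if_pos hk]
        rcases hσ j k hk with h | h <;> rw [h] <;> positivity
    have hFdisj : ∀ i j : Fin l, i ≠ j → Disjoint (F i) (F j) := by
      intro i j hij; rw [← hsupp i, ← hsupp j]; exact hdisj i j hij
    set G : Finset ℕ := Finset.univ.biUnion F with hG
    have hmem_unique : ∀ (i : ℕ) (j j' : Fin l), i ∈ F j → i ∈ F j' → j = j' := by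
      intro i j j' h h'
      by_contra hne
      exact Finset.disjoint_left.1 (hFdisj j j' hne) h h'
    set d' : ℕ → ℕ := fun i => ∑ j, if i ∈ F j then d j i + 1 else 0 with hd'
    set σ' : ℕ → ℝ := fun i => ∑ j, if i ∈ F j then σ j i else 0 with hσ'
    have hd'eq : ∀ (j : Fin l), ∀ i ∈ F j, d' i = d j i + 1 := by
      intro j i hi
      rw [hd']
      simp only []
      rw [Finset.sum_eq_single j]
      · rw [if_pos hi]
      · intro j' _ hne
        rw [if_neg (fun h => hne (hmem_unique i j' j h hi))]
      · intro h; exact absurd (Finset.mem_univ j) h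
    have hσ'eq : ∀ (j : Fin l), ∀ i ∈ F j, σ' i = σ j i := by
      intro j i hi
      rw [hσ']
      simp only []
      rw [Finset.sum_eq_single j]
      · rw [if_pos hi]
      · intro j' _ hne
        rw [if_neg (fun h => hne (hmem_unique i j' j h hi))]
      · intro h; exact absurd (Finset.mem_univ j) h
    refine ⟨G, d', σ', ?_, ?_, ?_⟩
    · intro i hi
      rw [hG, Finset.mem_biUnion] at hi
      obtain ⟨j, _, hij⟩ := hi
      rw [hσ'eq j i hij]; exact hσ j i hij
    · have : ∑ i ∈ G, ((r:ℝ) ^ (d' i))⁻¹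
          = ∑ j, ∑ i ∈ F j, ((r:ℝ) ^ (d' i))⁻¹ := by
        rw [hG, Finset.sum_biUnion]
        intro a _ b _ hab
        exact hFdisj a b hab
      rw [this]
      have hbound : ∀ j : Fin l, ∑ i ∈ F j, ((r:ℝ) ^ (d' i))⁻¹ ≤ (r:ℝ)⁻¹ := by
        intro j
        have : ∀ i ∈ F j, ((r:ℝ) ^ (d' i))⁻¹ = (r:ℝ)⁻¹ * ((r:ℝ) ^ (d j i))⁻¹ := by
          intro i hi
          rw [hd'eq j i hi, pow_succ, mul_inv, mul_comm]
        rw [Finset.sum_congr rfl this, ← Finset.mul_sum]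
        have h1 := hkraft j
        have h2 : (0:ℝ) < (r:ℝ)⁻¹ := by positivity
        nlinarith [hkraft j]
      calc ∑ j, ∑ i ∈ F j, ((r:ℝ) ^ (d' i))⁻¹ ≤ ∑ _j : Fin l, (r:ℝ)⁻¹ :=
            Finset.sum_le_sum (fun j _ => hbound j)
        _ = l * (r:ℝ)⁻¹ := by simp
        _ ≤ 1 := by
            rw [← le_div_iff₀ (by positivity), one_div, inv_inv]
            exact_mod_cast hlr
    · have step : ∀ j : Fin l,
          (tho q r) • (z j) = ∑ i ∈ F j, Finsupp.single i (σ' i * tho q r ^ (d' i)) := by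
        intro j
        rw [hrepr j, Finset.smul_sum]
        apply Finset.sum_congr rfl
        intro i hi
        rw [Finsupp.smul_single, hd'eq j i hi, hσ'eq j i hi, pow_succ, smul_eq_mul]
        ring_nf
      have : ((r : ℝ) ^ (-(1 / q) : ℝ)) • (∑ j, z j) = ∑ j, (tho q r) • z j := by
        rw [Finset.smul_sum]; rfl
      rw [this, Finset.sum_congr rfl (fun j _ => step j), hG, Finset.sum_biUnion]
      intro a _ b _ hab
      exact hFdisj a b hab



/-- Split a finite family of weights, each `≤ 1/4`, of total `≤ 1`, into three bins
each of total `≤ 1/2`. -/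
lemma three_bins (w : ℕ → ℝ) :
    ∀ (F : Finset ℕ), (∀ i ∈ F, 0 < w i) → (∀ i ∈ F, w i ≤ 1/4) →
    (∑ i ∈ F, w i) ≤ 1 →
    ∃ A B C : Finset ℕ, A ∪ B ∪ C = F ∧ Disjoint A B ∧ Disjoint (A ∪ B) C ∧
      (∑ i ∈ A, w i) ≤ 1/2 ∧ (∑ i ∈ B, w i) ≤ 1/2 ∧ (∑ i ∈ C, w i) ≤ 1/2 := by
  -- strengthen with disjointness
  suffices H : ∀ (F : Finset ℕ), (∀ i ∈ F, 0 < w i) → (∀ i ∈ F, w i ≤ 1/4) →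
      (∑ i ∈ F, w i) ≤ 1 →
      ∃ A B C : Finset ℕ, A ∪ B ∪ C = F ∧ Disjoint A B ∧ Disjoint (A ∪ B) C ∧
        (∑ i ∈ A, w i) ≤ 1/2 ∧ (∑ i ∈ B, w i) ≤ 1/2 ∧ (∑ i ∈ C, w i) ≤ 1/2 by
    intro F h1 h2 h3
    exact H F h1 h2 h3
  intro F
  induction F using Finset.induction_on with
  | empty =>
      intro _ _ _
      exact ⟨∅, ∅, ∅, by simp, by simp, by simp, by simp, by simp, by simp⟩
  | @insert a F' ha IH =>
      intro hpos hle hsum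
      have hsum0 : (∑ i ∈ insert a F', w i) = w a + ∑ i ∈ F', w i :=
        Finset.sum_insert ha
      have hsum' : (∑ i ∈ F', w i) ≤ 1 - w a := by rw [hsum0] at hsum; linarith
      have hwa : 0 < w a := hpos a (Finset.mem_insert_self a F')
      have hwa4 : w a ≤ 1/4 := hle a (Finset.mem_insert_self a F')
      obtain ⟨A, B, C, hABC, hdAB, hdABC, hA, hB, hC⟩ :=
        IH (fun i hi => hpos i (Finset.mem_insert_of_mem hi))
          (fun i hi => hle i (Finset.mem_insert_of_mem hi))
          (by linarith)
      have hsubA : A ⊆ F' := by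
        intro i hi; rw [← hABC]; exact Finset.mem_union_left _ (Finset.mem_union_left _ hi)
      have hsubB : B ⊆ F' := by
        intro i hi; rw [← hABC]; exact Finset.mem_union_left _ (Finset.mem_union_right _ hi)
      have hsubC : C ⊆ F' := by
        intro i hi; rw [← hABC]; exact Finset.mem_union_right _ hi
      have haA : a ∉ A := fun h => ha (hsubA h)
      have haB : a ∉ B := fun h => ha (hsubB h)
      have haC : a ∉ C := fun h => ha (hsubC h)
      have hsplit : (∑ i ∈ F', w i) =
          (∑ i ∈ A, w i) + (∑ i ∈ B, w i) + (∑ i ∈ C, w i) := by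
        rw [← hABC, Finset.sum_union hdABC, Finset.sum_union hdAB]
      have key : (∑ i ∈ A, w i) ≤ (∑ i ∈ F', w i)/3 ∨
          (∑ i ∈ B, w i) ≤ (∑ i ∈ F', w i)/3 ∨
          (∑ i ∈ C, w i) ≤ (∑ i ∈ F', w i)/3 := by
        by_contra h
        push_neg at h
        obtain ⟨h1, h2, h3⟩ := h
        linarith
      rcases key with hsmall | hsmall | hsmall
      · refine ⟨insert a A, B, C, ?_, ?_, ?_, ?_, hB, hC⟩
        · rw [Finset.insert_union, Finset.insert_union, hABC]
        · exact Finset.disjoint_insert_left.2 ⟨haB, hdAB⟩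
        · rw [Finset.insert_union]
          exact Finset.disjoint_insert_left.2 ⟨haC, hdABC⟩
        · rw [Finset.sum_insert haA]; linarith
      · refine ⟨A, insert a B, C, ?_, ?_, ?_, hA, ?_, hC⟩
        · rw [Finset.union_insert, Finset.insert_union, hABC]
        · exact Finset.disjoint_insert_right.2 ⟨haA, hdAB⟩
        · rw [Finset.union_insert]
          exact Finset.disjoint_insert_left.2 ⟨haC, hdABC⟩
        · rw [Finset.sum_insert haB]; linarith
      · refine ⟨A, B, insert a C, ?_, hdAB, ?_, hA, hB, ?_⟩
        · rw [Finset.union_insert, hABC]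
        · exact Finset.disjoint_insert_right.2 ⟨by
            simp only [Finset.mem_union]; rintro (h | h); exacts [haA h, haB h], hdABC⟩
        · rw [Finset.sum_insert haC]; linarith

structure TEntry where
  n : ℕ
  e : ℕ
  a : ℕ
  sg : ℝ

namespace TEntry

/-- the vector contributed by an entry, relative to level `s` -/
noncomputable def vec (q : ℝ) (r : ℕ) (s : ℕ) (x : TEntry) : ℕ →₀ ℝ :=
  Finsupp.single x.n (x.sg * tho q r ^ (x.e - s))

/-- total relative depth -/
def meas (L : List TEntry) (s : ℕ) : ℕ := (L.map (fun x => x.e - s)).sum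

lemma meas_succ (L : List TEntry) (s : ℕ) (h : ∀ x ∈ L, s + 1 ≤ x.e) :
    meas L (s + 1) + L.length = meas L s := by
  induction L with
  | nil => simp [meas]
  | cons x L ih =>
      have hx := h x (List.mem_cons_self)
      have ih' := ih (fun y hy => h y (List.mem_cons_of_mem x hy))
      simp only [meas, List.map_cons, List.sum_cons, List.length_cons] at *
      omega

lemma supp_sum_subset (q : ℝ) (r : ℕ) (s : ℕ) (L : List TEntry) :
    ((L.map (vec q r s)).sum).support ⊆ (L.map TEntry.n).toFinset := by
  induction L with
  | nil => simp
  | cons x L ih =>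
      simp only [List.map_cons, List.sum_cons]
      refine subset_trans Finsupp.support_add ?_
      intro k hk
      rcases Finset.mem_union.1 hk with h | h
      · have := Finsupp.support_single_subset h
        simp only [Finset.mem_singleton] at this
        simp [vec, this]
      · have := ih h
        simp only [List.mem_toFinset] at this ⊢
        simp [this]

lemma fiber_sum {M : Type*} [AddCommMonoid M] (r : ℕ) (tOf : TEntry → ℕ) (g : TEntry → M) :
    ∀ (L : List TEntry), (∀ x ∈ L, tOf x < r) →
    ∑ t ∈ Finset.range r, ((L.filter (fun x => tOf x = t)).map g).sum = (L.map g).sum := by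
  intro L
  induction L with
  | nil => simp
  | cons x L ih =>
      intro h
      have hx : tOf x ∈ Finset.range r := Finset.mem_range.2 (h x (List.mem_cons_self))
      have ih' := ih (fun y hy => h y (List.mem_cons_of_mem x hy))
      have hsplit : ∀ t, ((List.cons x L).filter (fun y => tOf y = t)).map g
          = (if tOf x = t then [g x] else []) ++ (L.filter (fun y => tOf y = t)).map g := by
        intro t
        by_cases hxt : tOf x = t
        · simp [List.filter_cons, hxt]
        · simp [List.filter_cons, hxt]
      calc ∑ t ∈ Finset.range r, (((x :: L).filter (fun y => tOf y = t)).map g).sum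
          = ∑ t ∈ Finset.range r,
            (((if tOf x = t then [g x] else []) ++ (L.filter (fun y => tOf y = t)).map g)).sum := by
            refine Finset.sum_congr rfl (fun t _ => by rw [hsplit t])
        _ = ∑ t ∈ Finset.range r, ((if tOf x = t then g x else 0)
              + ((L.filter (fun y => tOf y = t)).map g).sum) := by
            refine Finset.sum_congr rfl (fun t _ => ?_)
            by_cases hxt : tOf x = t <;> simp [hxt]
        _ = (∑ t ∈ Finset.range r, (if tOf x = t then g x else 0))
              + ∑ t ∈ Finset.range r, ((L.filter (fun y => tOf y = t)).map g).sum := by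
            rw [Finset.sum_add_distrib]
        _ = g x + (L.map g).sum := by
            rw [ih', Finset.sum_ite_eq (Finset.range r) (tOf x) (fun _ => g x), if_pos hx]
        _ = ((x :: L).map g).sum := by simp

end TEntry

open TEntry

lemma dvd_next (d a b : ℕ) (hd : 0 < d) (h : a < b) (ha : d ∣ a) (hb : d ∣ b) : a + d ≤ b := by
  obtain ⟨u, rfl⟩ := ha
  obtain ⟨v, rfl⟩ := hb
  have : u < v := by
    by_contra hvu
    exact absurd (Nat.mul_le_mul_left d (Nat.le_of_not_lt hvu)) (Nat.not_le_of_lt h)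
  calc d * u + d = d * (u + 1) := by ring
    _ ≤ d * v := Nat.mul_le_mul_left d this
  
lemma realizeD (q : ℝ) (r : ℕ) (hq : 1 < q) (hr : 2 ≤ r) (E : ℕ) :
    ∀ (m : ℕ) (L : List TEntry) (s A : ℕ),
    meas L s = m →
    L ≠ [] →
    (∀ x ∈ L, s ≤ x.e ∧ x.e ≤ E ∧ r ^ (E - x.e) ∣ x.a ∧ A ≤ x.a ∧
      x.a + r ^ (E - x.e) ≤ A + r ^ (E - s) ∧ (x.sg = 1 ∨ x.sg = -1)) →
    L.Pairwise (fun u v => u.n < v.n ∧ u.a + r ^ (E - u.e) ≤ v.a) →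
    r ^ (E - s) ∣ A →
    (L.map (vec q r s)).sum ∈ Kqr q r := by
  have hr0 : 0 < r := by omega
  have hr1 : 1 ≤ r := by omega
  intro m
  induction m using Nat.strong_induction_on with
  | _ m IH =>
  intro L s A hm hL h1 h2 h3
  have hwpos : ∀ k : ℕ, 0 < r ^ k := fun k => Nat.pow_pos hr0
  by_cases hex : ∃ x ∈ L, x.e = s
  · -- singleton case
    obtain ⟨x, hxL, hxe⟩ := hex
    -- any ordered pair leads to contradiction
    have hpair : ∀ u v : TEntry, u ∈ L → v ∈ L →
        (u.n < v.n ∧ u.a + r ^ (E - u.e) ≤ v.a) → False ∨ True := fun _ _ _ _ _ => Or.inr trivial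
    match L, hL with
    | [y], _ =>
      have hxy : x = y := by simpa using hxL
      subst hxy
      simp only [List.map_cons, List.map_nil, List.sum_cons, List.sum_nil, add_zero]
      rw [vec, hxe, Nat.sub_self, pow_zero, mul_one]
      exact single_mem_Kqr q r x.n x.sg ((h1 x (by simp)).2.2.2.2.2)
    | y :: z :: L', _ =>
      exfalso
      have hrel : y.n < z.n ∧ y.a + r ^ (E - y.e) ≤ z.a :=
        (List.pairwise_cons.1 h2).1 z (List.mem_cons_self)
      have hy1 := h1 y (by simp)
      have hz1 := h1 z (by simp)
      -- x is y or in the tail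
      rcases List.mem_cons.1 hxL with hxy | hxtail
      · -- u := y has e = s
        subst hxy
        rw [hxe] at hrel
        have := hz1.2.2.2.2.1 -- z.a + w ≤ A + r^(E-s)
        have h4 := hy1.2.2.2.1 -- A ≤ y.a
        have h5 := hwpos (E - z.e)
        omega
      · -- v := x in tail has e = s
        have hrelyx : y.n < x.n ∧ y.a + r ^ (E - y.e) ≤ x.a :=
          (List.pairwise_cons.1 h2).1 x hxtail
        have hx1 := h1 x hxL
        have h4 := hx1.2.2.2.2.1 -- x.a + r^(E-s) ≤ A + r^(E-s)
        rw [hxe] at h4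
        have h5 := hy1.2.2.2.1 -- A ≤ y.a
        have h6 := hwpos (E - y.e)
        omega
  · -- recursive case
    push_neg at hex
    have he1 : ∀ x ∈ L, s + 1 ≤ x.e := by
      intro x hx
      have := (h1 x hx).1
      have := hex x hx
      omega
    obtain ⟨x₀, hx₀⟩ : ∃ x, x ∈ L := List.exists_mem_of_ne_nil L hL
    have hsE : s < E := by
      have := he1 x₀ hx₀
      have := (h1 x₀ hx₀).2.1
      omega
    set c : ℕ := r ^ (E - s - 1) with hc
    have hcpos : 0 < c := hwpos _
    have hrc : r ^ (E - s) = r * c := by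
      rw [hc, ← pow_succ']
      congr 1
      omega
    set tOf : TEntry → ℕ := fun x => (x.a - A) / c with htOf
    have ht_lt : ∀ x ∈ L, tOf x < r := by
      intro x hx
      have h5 := (h1 x hx).2.2.2.2.1
      have h4 := (h1 x hx).2.2.2.1
      have hw := hwpos (E - x.e)
      apply Nat.div_lt_of_lt_mul
      rw [Nat.mul_comm, ← hrc]
      omega
    have hAt_le : ∀ x ∈ L, A + tOf x * c ≤ x.a := by
      intro x hx
      have h4 := (h1 x hx).2.2.2.1
      have h5 : tOf x * c ≤ x.a - A := Nat.div_mul_le_self (x.a - A) c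
      omega
    have hwc : ∀ x ∈ L, r ^ (E - x.e) ∣ c := by
      intro x hx
      rw [hc]
      exact pow_dvd_pow r (by have := he1 x hx; have := (h1 x hx).2.1; omega)
    have hcA : c ∣ A := dvd_trans (pow_dvd_pow r (by omega)) h3
    have hnext : ∀ x ∈ L, x.a + r ^ (E - x.e) ≤ A + (tOf x + 1) * c := by
      intro x hx
      have h4 := (h1 x hx).2.2.2.1
      have hlt : x.a - A < (tOf x + 1) * c := by
        rw [add_mul, one_mul]
        have h1' : c * tOf x + (x.a - A) % c = x.a - A := Nat.div_add_mod (x.a - A) c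
        have h2' : (x.a - A) % c < c := Nat.mod_lt (x.a - A) hcpos
        have h3' : c * tOf x = tOf x * c := Nat.mul_comm _ _
        omega
      have hlt2 : x.a < A + (tOf x + 1) * c := by omega
      apply dvd_next _ _ _ (hwpos (E - x.e)) hlt2 ((h1 x hx).2.2.1)
      have hdA : r ^ (E - x.e) ∣ A := dvd_trans (pow_dvd_pow r (by have := (h1 x hx).1; omega)) h3
      exact Dvd.dvd.add hdA (Dvd.dvd.mul_left (hwc x hx) _)
    -- fibers
    classical
    set Lt : ℕ → List TEntry := fun t => L.filter (fun x => tOf x = t) with hLt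
    have hmemLt : ∀ t x, x ∈ Lt t ↔ x ∈ L ∧ tOf x = t := by
      intro t x
      rw [hLt]
      simp [List.mem_filter]
    set ts : Finset ℕ := (Finset.range r).filter (fun t => Lt t ≠ []) with hts
    have hts_mem : ∀ t, t ∈ ts ↔ t < r ∧ Lt t ≠ [] := by
      intro t; rw [hts]; simp [Finset.mem_filter]
    have hts_ne : x₀ ∈ Lt (tOf x₀) := (hmemLt _ _).2 ⟨hx₀, rfl⟩
    have hts_nonempty : tOf x₀ ∈ ts := (hts_mem _).2 ⟨ht_lt x₀ hx₀,
      fun h => by rw [h] at hts_ne; exact absurd hts_ne (List.not_mem_nil)⟩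
    set l' : ℕ := ts.card with hl'
    have hl1 : 1 ≤ l' := Finset.card_pos.2 ⟨_, hts_nonempty⟩
    have hlr : l' ≤ r := by
      rw [hl']
      calc ts.card ≤ (Finset.range r).card := Finset.card_le_card (Finset.filter_subset _ _)
        _ = r := Finset.card_range r
    set oi := ts.orderIsoOfFin rfl with hoi
    set Z : ℕ → (ℕ →₀ ℝ) := fun t => ((Lt t).map (vec q r (s+1))).sum with hZ
    set z : Fin l' → (ℕ →₀ ℝ) := fun i => Z ((oi i : ℕ)) with hz
    -- each fiber is in Kqr by induction
    have hZmem : ∀ t ∈ ts, Z t ∈ Kqr q r := by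
      intro t ht
      obtain ⟨htr, htne⟩ := (hts_mem t).1 ht
      have hsub : List.Sublist (Lt t) L := List.filter_sublist
      have hmeas_lt : meas (Lt t) (s+1) < m := by
        have h1' : meas (Lt t) (s+1) + (Lt t).length = meas (Lt t) s :=
          meas_succ _ _ (fun x hx => he1 x (hsub.mem hx))
        have h2' : meas (Lt t) s ≤ meas L s := (hsub.map _).sum_le_sum (fun _ _ => Nat.zero_le _)
        have h3' : 1 ≤ (Lt t).length := by
          rcases List.exists_mem_of_ne_nil _ htne with ⟨x, hx⟩
          exact List.length_pos_iff.2 htne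
        omega
      refine IH _ hmeas_lt (Lt t) (s+1) (A + t * c) rfl htne ?_ (h2.sublist hsub) ?_
      · intro x hx
        obtain ⟨hxL', hxt⟩ := (hmemLt t x).1 hx
        obtain ⟨ha1, ha2, ha3, ha4, ha5, ha6⟩ := h1 x hxL'
        refine ⟨he1 x hxL', ha2, ha3, ?_, ?_, ha6⟩
        · rw [← hxt]; exact hAt_le x hxL'
        · have : r ^ (E - (s+1)) = c := by rw [hc]; congr 1
          rw [this, ← hxt]
          have := hnext x hxL'
          calc x.a + r ^ (E - x.e) ≤ A + (tOf x + 1) * c := this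
            _ = A + tOf x * c + c := by ring
      · have : r ^ (E - (s+1)) = c := by rw [hc]; congr 1
        rw [this]
        exact Dvd.dvd.add hcA (Dvd.dvd.mul_left dvd_rfl t)
    have hzmem : ∀ i, z i ∈ Kqr q r := fun i => hZmem _ (oi i).2
    -- cross-fiber ordering
    have hcross : ∀ (t t' : ℕ), t < t' → ∀ u ∈ Lt t, ∀ v ∈ Lt t', u.n < v.n := by
      intro t t' htt u hu v hv
      obtain ⟨huL, hut⟩ := (hmemLt t u).1 hu
      obtain ⟨hvL, hvt⟩ := (hmemLt t' v).1 hv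
      have huv : u ≠ v := fun h => by rw [h, hvt] at hut; omega
      have hsym : L.Pairwise (fun a b => (a.n < b.n ∧ a.a + r ^ (E - a.e) ≤ b.a) ∨
          (b.n < a.n ∧ b.a + r ^ (E - b.e) ≤ a.a)) := h2.imp (fun h => Or.inl h)
      have := (haveI : Std.Symm (fun a b : TEntry => (a.n < b.n ∧ a.a + r ^ (E - a.e) ≤ b.a) ∨
          (b.n < a.n ∧ b.a + r ^ (E - b.e) ≤ a.a)) := ⟨fun _ _ h => h.symm⟩; hsym.forall huL hvL huv)
      rcases this with h | h
      · exact h.1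
      · exfalso
        have hva : A + t' * c ≤ v.a := by rw [← hvt]; exact hAt_le v hvL
        have hua : u.a + r ^ (E - u.e) ≤ A + (t + 1) * c := by rw [← hut]; exact hnext u huL
        have htc : (t + 1) * c ≤ t' * c := Nat.mul_le_mul_right c (by omega)
        have hwv := hwpos (E - v.e)
        have hwu := hwpos (E - u.e)
        omega
    have hsucc : ∀ i j : Fin l', i < j →
        ∀ a ∈ (z i).support, ∀ b ∈ (z j).support, a < b := by
      intro i j hij a ha b hb
      have htt : ((oi i : ℕ)) < ((oi j : ℕ)) := by
        have : oi i < oi j := (OrderIso.lt_iff_lt oi).2 hij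
        exact_mod_cast this
      rw [hz] at ha hb
      have ha' := supp_sum_subset q r (s+1) (Lt (oi i)) ha
      have hb' := supp_sum_subset q r (s+1) (Lt (oi j)) hb
      simp only [List.mem_toFinset, List.mem_map] at ha' hb'
      obtain ⟨u, hu, rfl⟩ := ha'
      obtain ⟨v, hv, rfl⟩ := hb'
      exact hcross _ _ htt u hu v hv
    have hmain := (Kqr_closed q r).2 l' z hl1 hlr hzmem hsucc
    -- rewrite the sum
    have hsum1 : ∑ i, z i = ∑ t ∈ ts, Z t := by
      rw [hz]
      rw [← Finset.sum_coe_sort ts Z]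
      exact Equiv.sum_comp oi.toEquiv (fun t : ts => Z (t : ℕ))
    have hsum2 : ∑ t ∈ ts, Z t = ∑ t ∈ Finset.range r, Z t := by
      rw [hts]
      apply Finset.sum_filter_of_ne
      intro t _ hZt
      intro hnil
      apply hZt
      rw [hZ]
      simp only []
      rw [hnil]
      simp
    have hsum3 : ∑ t ∈ Finset.range r, Z t = (L.map (vec q r (s+1))).sum := by
      rw [hZ]
      exact fiber_sum r tOf (vec q r (s+1)) L ht_lt
    have hfinal : (tho q r) • (∑ i, z i) = (L.map (vec q r s)).sum := by
      rw [hsum1, hsum2, hsum3, List.smul_sum, List.map_map]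
      congr 1
      apply List.map_congr_left
      intro x hx
      simp only [Function.comp_apply, vec, Finsupp.smul_single, smul_eq_mul]
      congr 1
      have hxe : s + 1 ≤ x.e := he1 x hx
      have : x.e - s = (x.e - (s+1)) + 1 := by omega
      rw [this, pow_succ]
      ring
    rw [← hfinal]
    exact hmain


open TEntry

section PosList

variable (W : ℕ → ℕ) (e : ℕ → ℕ) (σ : ℕ → ℝ)

def posList : List ℕ → ℕ → List TEntry
  | [], _ => []
  | n :: rest, cur =>
      let w := W n
      let a := w * ((cur + w - 1) / w)
      ⟨n, e n, a, σ n⟩ :: posList rest (a + w)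

lemma posList_head_bounds (w cur : ℕ) (hw : 0 < w) :
    cur ≤ w * ((cur + w - 1) / w) ∧ w * ((cur + w - 1) / w) + w ≤ cur + 2 * w := by
  set x := cur + w - 1 with hx
  have h1 : w * (x / w) + x % w = x := Nat.div_add_mod x w
  have h2 : x % w < w := Nat.mod_lt x hw
  omega

lemma posList_mem (hW : ∀ n, 0 < W n) :
    ∀ (l : List ℕ) (cur : ℕ), ∀ x ∈ posList W e σ l cur,
      (∃ n, n ∈ l ∧ x.n = n ∧ x.e = e n ∧ x.sg = σ n) ∧ W x.n ∣ x.a ∧ cur ≤ x.a ∧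
      x.a + W x.n ≤ cur + 2 * (l.map W).sum := by
  intro l
  induction l with
  | nil => intro cur x hx; simp [posList] at hx
  | cons n rest ih =>
      intro cur x hx
      rw [posList] at hx
      simp only [List.mem_cons] at hx
      obtain ⟨hb1, hb2⟩ := posList_head_bounds (W n) cur (hW n)
      rcases hx with rfl | hx
      · refine ⟨⟨n, List.mem_cons_self, rfl, rfl, rfl⟩, ⟨_, rfl⟩, hb1, ?_⟩
        simp only [List.map_cons, List.sum_cons]
        omega
      · obtain ⟨⟨n', hn', h1, h2, h3⟩, h4, h5, h6⟩ := ih _ x hx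
        refine ⟨⟨n', List.mem_cons_of_mem n hn', h1, h2, h3⟩, h4, by omega, ?_⟩
        simp only [List.map_cons, List.sum_cons]
        omega

lemma posList_pairwise (hW : ∀ n, 0 < W n) :
    ∀ (l : List ℕ) (cur : ℕ), l.Pairwise (· < ·) →
      (posList W e σ l cur).Pairwise (fun u v => u.n < v.n ∧ u.a + W u.n ≤ v.a) := by
  intro l
  induction l with
  | nil => intro cur _; simp [posList]
  | cons n rest ih =>
      intro cur hp
      rw [posList]
      rw [List.pairwise_cons] at hp ⊢
      constructor
      · intro y hy
        obtain ⟨⟨n', hn', h1, _, _⟩, _, h5, _⟩ := posList_mem W e σ hW rest _ y hy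
        constructor
        · show n < y.n
          rw [h1]
          exact hp.1 n' hn'
        · exact le_trans (le_refl _) h5
      · exact ih _ hp.2

lemma posList_map_vec (q : ℝ) (r : ℕ) :
    ∀ (l : List ℕ) (cur : ℕ),
      (posList W e σ l cur).map (vec q r 0)
        = l.map (fun n => Finsupp.single n (σ n * tho q r ^ (e n))) := by
  intro l
  induction l with
  | nil => intro cur; simp [posList]
  | cons n rest ih =>
      intro cur
      rw [posList]
      simp only [List.map_cons, ih]
      congr 1

end PosList

lemma realize_finset (q : ℝ) (r : ℕ) (hq : 1 < q) (hr : 2 ≤ r)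
    (P : Finset ℕ) (hP : P.Nonempty) (e : ℕ → ℕ) (σ : ℕ → ℝ)
    (hσ : ∀ i ∈ P, σ i = 1 ∨ σ i = -1)
    (hkraft : (∑ i ∈ P, ((r : ℝ) ^ (e i))⁻¹) ≤ 1 / 2) :
    (∑ i ∈ P, Finsupp.single i (σ i * tho q r ^ (e i))) ∈ Kqr q r := by
  classical
  have hr0 : 0 < r := by omega
  have hrR : (0:ℝ) < (r:ℝ) := by exact_mod_cast hr0
  set E : ℕ := P.sup e with hE
  have heE : ∀ i ∈ P, e i ≤ E := fun i hi => Finset.le_sup hi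
  set W : ℕ → ℕ := fun n => r ^ (E - e n) with hWdef
  have hWpos : ∀ n, 0 < W n := fun n => Nat.pow_pos hr0
  -- the ℕ Kraft bound
  have hWsum : 2 * (∑ i ∈ P, W i) ≤ r ^ E := by
    have key : ∀ i ∈ P, ((W i : ℕ) : ℝ) = ((r:ℝ) ^ E) * ((r:ℝ) ^ (e i))⁻¹ := by
      intro i hi
      have hne : ((r:ℝ) ^ (e i)) ≠ 0 := by positivity
      rw [hWdef]
      push_cast
      rw [eq_comm, mul_inv_eq_iff_eq_mul₀ hne, ← pow_add]
      congr 1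
      have := heE i hi
      omega
    have h2 : (∑ i ∈ P, ((W i : ℕ) : ℝ)) ≤ ((r:ℝ) ^ E) * (1/2) := by
      rw [Finset.sum_congr rfl key, ← Finset.mul_sum]
      exact mul_le_mul_of_nonneg_left hkraft (by positivity)
    have h4 : ((2 * ∑ i ∈ P, W i : ℕ) : ℝ) ≤ (((r:ℕ) ^ E : ℕ) : ℝ) := by
      push_cast at h2 ⊢
      linarith
    exact_mod_cast h4
  set l : List ℕ := P.sort (· ≤ ·) with hl
  have hlnil : l ≠ [] := by
    rw [hl, ← List.length_pos_iff, Finset.length_sort]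
    exact Finset.card_pos.2 hP
  have hlsorted : l.Pairwise (· < ·) := (Finset.sortedLT_sort P).pairwise
  have hlmem : ∀ n, n ∈ l ↔ n ∈ P := fun n => Finset.mem_sort _
  have hlperm : List.Perm l P.toList := Finset.sort_perm_toList _ _
  have hsumW : (l.map W).sum = ∑ i ∈ P, W i := by
    rw [(hlperm.map W).sum_eq, Finset.sum_map_toList]
  set L : List TEntry := posList W e σ l 0 with hL
  have hreal := realizeD q r hq hr E (meas L 0) L 0 0 rfl ?_ ?_ ?_ ?_
  · -- identify the sum
    have hmap : L.map (vec q r 0) = l.map (fun n => Finsupp.single n (σ n * tho q r ^ (e n))) :=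
      posList_map_vec W e σ q r l 0
    rw [hmap] at hreal
    have : (l.map (fun n => Finsupp.single n (σ n * tho q r ^ (e n)))).sum
        = ∑ i ∈ P, Finsupp.single i (σ i * tho q r ^ (e i)) := by
      rw [(hlperm.map _).sum_eq, Finset.sum_map_toList]
    rwa [this] at hreal
  · -- L ≠ []
    obtain ⟨n0, l0, hcons⟩ := List.exists_cons_of_ne_nil hlnil
    rw [hL, hcons]
    simp [posList]
  · -- pointwise conditions
    intro x hx
    obtain ⟨⟨n', hn', h1, h2, h3⟩, h4, h5, h6⟩ := posList_mem W e σ hWpos l 0 x hx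
    have hn'P : n' ∈ P := (hlmem n').1 hn'
    refine ⟨Nat.zero_le _, ?_, ?_, Nat.zero_le _, ?_, ?_⟩
    · rw [h2]; exact heE n' hn'P
    · rw [h2]
      rw [h1] at h4
      exact h4
    · rw [h2, Nat.sub_zero, zero_add]
      rw [h1] at h6
      show x.a + W n' ≤ r ^ E
      calc x.a + W n' ≤ 0 + 2 * (l.map W).sum := h6
        _ ≤ r ^ E := by rw [hsumW]; omega
    · rw [h3]; exact hσ n' hn'P
  · -- pairwise
    have hp := posList_pairwise W e σ hWpos l 0 hlsorted
    refine List.Pairwise.imp_of_mem ?_ hp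
    intro u v hu hv huv
    obtain ⟨⟨n', _, h1, h2, _⟩, _, _, _⟩ := posList_mem W e σ hWpos l 0 u hu
    refine ⟨huv.1, ?_⟩
    have : W u.n = r ^ (E - u.e) := by rw [hWdef, h1, h2]
    rw [← this]
    exact huv.2
  · exact dvd_zero _

/-! ### Assembly -/

lemma single_mem_KMqr (q : ℝ) (r : ℕ) (n : ℕ) : Finsupp.single n (1:ℝ) ∈ KMqr q r :=
  fun _ hS => (hS.1 n).1

lemma KMqr_subset_rep (q : ℝ) (r : ℕ) (hq : 1 < q) (hr : 2 ≤ r) :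
    KMqr q r ⊆ {y | KMRep q r y} := fun _ hy =>
  hy _ (KMRep_modclosed q r hq hr)

lemma rep_coeff_le_one (q : ℝ) (r : ℕ) (hq : 1 < q) (hr : 2 ≤ r) (y : ℕ →₀ ℝ)
    (hy : KMRep q r y) (k : ℕ) : |y k| ≤ 1 := by
  obtain ⟨F, d, σ, hσ, _, rfl⟩ := hy
  rw [sum_single_apply]
  by_cases hk : k ∈ F
  · rw [if_pos hk, abs_mul]
    have h1 : |σ k| = 1 := by rcases hσ k hk with h | h <;> simp [h]
    rw [h1, one_mul, abs_pow]
    have h2 : |tho q r| = tho q r := abs_of_pos (tho_pos q r hr)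
    rw [h2]
    exact pow_le_one₀ (le_of_lt (tho_pos q r hr)) (tho_le_one q r hq hr)
  · rw [if_neg hk]; simp

section Main

variable (p q : ℝ) (r : ℕ) (x : ℕ →₀ ℝ)

lemma inner_ub (q : ℝ) (r : ℕ) (hq : 1 < q) (hr : 2 ≤ r) (x : ℕ →₀ ℝ) :
    ∀ v ∈ (fun y => ∑ i ∈ x.support, x i * y i) '' KMqr q r,
      v ≤ ∑ i ∈ x.support, |x i| := by
  rintro v ⟨y, hy, rfl⟩
  have hrep := KMqr_subset_rep q r hq hr hy
  apply Finset.sum_le_sum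
  intro i _
  calc x i * y i ≤ |x i * y i| := le_abs_self _
    _ = |x i| * |y i| := abs_mul _ _
    _ ≤ |x i| * 1 := by
        apply mul_le_mul_of_nonneg_left (rep_coeff_le_one q r hq hr y hrep i) (abs_nonneg _)
    _ = |x i| := mul_one _

lemma bddAbove_M (q : ℝ) (r : ℕ) (hq : 1 < q) (hr : 2 ≤ r) (x : ℕ →₀ ℝ) :
    BddAbove ((fun y => ∑ i ∈ x.support, x i * y i) '' KMqr q r) :=
  ⟨∑ i ∈ x.support, |x i|, fun v hv => inner_ub q r hq hr x v hv⟩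

lemma bddAbove_K (q : ℝ) (r : ℕ) (hq : 1 < q) (hr : 2 ≤ r) (x : ℕ →₀ ℝ) :
    BddAbove ((fun z => ∑ i ∈ x.support, x i * z i) '' Kqr q r) := by
  obtain ⟨b, hb⟩ := bddAbove_M q r hq hr x
  exact ⟨b, fun v hv => hb (Set.image_mono (Kqr_subset_KMqr q r) hv)⟩

lemma lam_ge (q : ℝ) (r : ℕ) (hq : 1 < q) (hr : 2 ≤ r) (x : ℕ →₀ ℝ)
    (z : ℕ →₀ ℝ) (hz : z ∈ Kqr q r) :
    (∑ i ∈ x.support, x i * z i) ≤ classicalNorm q r x :=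
  le_csSup (bddAbove_K q r hq hr x) (Set.mem_image_of_mem _ hz)

lemma val_single (x : ℕ →₀ ℝ) (n : ℕ) (c : ℝ) :
    (∑ i ∈ x.support, x i * (Finsupp.single n c) i)
      = if n ∈ x.support then x n * c else 0 := by
  have : ∀ i ∈ x.support, x i * (Finsupp.single n c) i
      = if n = i then x i * c else 0 := by
    intro i _
    rw [Finsupp.single_apply]
    by_cases h : n = i <;> simp [h]
  rw [Finset.sum_congr rfl this, Finset.sum_ite_eq x.support n (fun i => x i * c)]

lemma lam_nonneg (q : ℝ) (r : ℕ) (hq : 1 < q) (hr : 2 ≤ r) (x : ℕ →₀ ℝ) :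
    0 ≤ classicalNorm q r x := by
  have h1 := lam_ge q r hq hr x _ (single_mem_Kqr q r 0 1 (Or.inl rfl))
  have h2 := lam_ge q r hq hr x _ (single_mem_Kqr q r 0 (-1) (Or.inr rfl))
  rw [val_single] at h1 h2
  by_cases h0 : (0:ℕ) ∈ x.support
  · rw [if_pos h0] at h1 h2
    rcases le_total 0 (x 0) with h | h
    · nlinarith
    · nlinarith
  · rw [if_neg h0] at h1
    exact h1

end Main

section KeyLemma

variable (q : ℝ) (r : ℕ)

/-- the sign pattern of `x` -/
noncomputable def sgn (x : ℕ →₀ ℝ) : ℕ → ℝ := fun i => if 0 ≤ x i then 1 else -1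

lemma sgn_pm (x : ℕ →₀ ℝ) : ∀ i, sgn x i = 1 ∨ sgn x i = -1 := by
  intro i
  rw [sgn]
  by_cases h : 0 ≤ x i <;> simp [h]

lemma sgn_mul (x : ℕ →₀ ℝ) (i : ℕ) : x i * sgn x i = |x i| := by
  rw [sgn]
  by_cases h : 0 ≤ x i
  · rw [if_pos h, mul_one, abs_of_nonneg h]
  · rw [if_neg h, abs_of_neg (lt_of_not_ge h)]; ring

lemma val_part (x : ℕ →₀ ℝ) (P : Finset ℕ) (c : ℕ → ℝ) (hP : P ⊆ x.support) :
    (∑ i ∈ x.support, x i * (∑ j ∈ P, Finsupp.single j (c j) : ℕ →₀ ℝ) i)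
      = ∑ i ∈ P, x i * c i := by
  have h1 : ∀ i ∈ x.support, x i * (∑ j ∈ P, Finsupp.single j (c j) : ℕ →₀ ℝ) i
      = if i ∈ P then x i * c i else 0 := by
    intro i _
    rw [sum_single_apply]
    by_cases h : i ∈ P <;> simp [h]
  rw [Finset.sum_congr rfl h1, Finset.sum_ite_mem, Finset.inter_eq_right.2 hP]

lemma piece_le (hq : 1 < q) (hr : 2 ≤ r) (x : ℕ →₀ ℝ) (P : Finset ℕ)
    (hP : P ⊆ x.support) (e : ℕ → ℕ)
    (hkraft : (∑ i ∈ P, ((r : ℝ) ^ (e i))⁻¹) ≤ 1 / 2) :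
    (∑ i ∈ P, |x i| * tho q r ^ (e i)) ≤ classicalNorm q r x := by
  rcases Finset.eq_empty_or_nonempty P with rfl | hne
  · simpa using lam_nonneg q r hq hr x
  · have hz := realize_finset q r hq hr P hne e (sgn x) (fun i _ => sgn_pm x i) hkraft
    have hval := lam_ge q r hq hr x _ hz
    rw [val_part x P _ hP] at hval
    have : ∀ i ∈ P, x i * (sgn x i * tho q r ^ (e i)) = |x i| * tho q r ^ (e i) := by
      intro i _
      rw [← mul_assoc, sgn_mul]
    rwa [Finset.sum_congr rfl this] at hval

lemma key_bound (hq : 1 < q) (hr : 2 ≤ r) (x : ℕ →₀ ℝ) :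
    ∀ y ∈ KMqr q r, (∑ i ∈ x.support, x i * y i) ≤ 3 * classicalNorm q r x := by
  intro y hy
  have hl0 := lam_nonneg q r hq hr x
  have hth_pos := tho_pos q r hr
  have hrR : (2:ℝ) ≤ (r:ℝ) := by exact_mod_cast hr
  obtain ⟨F, d, σ, hσ, hkraft, rfl⟩ := KMqr_subset_rep q r hq hr hy
  set G : Finset ℕ := x.support ∩ F with hG
  have hGsupp : G ⊆ x.support := Finset.inter_subset_left
  have hGF : G ⊆ F := Finset.inter_subset_right
  set T : ℝ := ∑ i ∈ G, |x i| * tho q r ^ (d i) with hT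
  have hT0 : 0 ≤ T := Finset.sum_nonneg (fun i _ => by positivity)
  -- the inner product is at most `T`
  have hval_le : (∑ i ∈ x.support, x i * (∑ i ∈ F, Finsupp.single i
      (σ i * tho q r ^ (d i)) : ℕ →₀ ℝ) i) ≤ T := by
    have h1 : ∀ i ∈ x.support, x i * (∑ j ∈ F, Finsupp.single j
        (σ j * tho q r ^ (d j)) : ℕ →₀ ℝ) i
        = if i ∈ F then x i * (σ i * tho q r ^ (d i)) else 0 := by
      intro i _
      rw [sum_single_apply]
      by_cases h : i ∈ F <;> simp [h]
    rw [Finset.sum_congr rfl h1, Finset.sum_ite_mem, ← hG, hT]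
    apply Finset.sum_le_sum
    intro i hi
    rw [← mul_assoc]
    have habs : x i * σ i ≤ |x i| := by
      calc x i * σ i ≤ |x i * σ i| := le_abs_self _
        _ = |x i| * |σ i| := abs_mul _ _
        _ = |x i| := by
            rcases hσ i (hGF hi) with h | h <;> rw [h] <;> simp
    exact mul_le_mul_of_nonneg_right habs (le_of_lt (pow_pos hth_pos _))
  -- now bound `T` by `3λ`
  suffices hT3 : T ≤ 3 * classicalNorm q r x by linarith
  by_cases hd0 : ∃ i ∈ F, d i = 0
  · -- `F` is a singleton `{i0}`
    obtain ⟨i0, hi0F, hdi0⟩ := hd0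
    have hFone : ∀ j ∈ F, j = i0 := by
      intro j hjF
      by_contra hne
      have hpair : ({i0, j} : Finset ℕ) ⊆ F := by
        intro k hk
        rcases Finset.mem_insert.1 hk with rfl | hk
        · exact hi0F
        · rw [Finset.mem_singleton.1 hk]; exact hjF
      have hle := Finset.sum_le_sum_of_subset_of_nonneg hpair
        (fun k _ _ => by positivity : ∀ k ∈ F, k ∉ ({i0, j} : Finset ℕ) → 0 ≤ ((r:ℝ) ^ (d k))⁻¹)
      rw [Finset.sum_pair (fun h => hne h.symm)] at hle
      have h2 : ((r:ℝ) ^ (d i0))⁻¹ = 1 := by rw [hdi0, pow_zero, inv_one]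
      have h3 : (0:ℝ) < ((r:ℝ) ^ (d j))⁻¹ := by positivity
      linarith
    have hGsub : G ⊆ {i0} := fun k hk => Finset.mem_singleton.2 (hFone k (hGF hk))
    rcases Finset.eq_empty_or_nonempty G with hGe | hGne
    · rw [hT, hGe, Finset.sum_empty] at *
      linarith
    · have hGeq : G = {i0} := Finset.Subset.antisymm hGsub
        (Finset.singleton_subset_iff.2 (by
          obtain ⟨k, hk⟩ := hGne
          rwa [hFone k (hGF hk)] at hk))
      have hi0supp : i0 ∈ x.support := hGsupp (hGeq ▸ Finset.mem_singleton_self i0)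
      have hTeq : T = |x i0| := by
        rw [hT, hGeq, Finset.sum_singleton, hdi0, pow_zero, mul_one]
      have hz := lam_ge q r hq hr x _ (single_mem_Kqr q r i0 (sgn x i0) (sgn_pm x i0))
      rw [val_single, if_pos hi0supp, sgn_mul] at hz
      rw [hTeq]
      linarith
  · -- all depths are at least 1
    push_neg at hd0
    have hd1 : ∀ i ∈ F, 1 ≤ d i := fun i hi => Nat.one_le_iff_ne_zero.2 (hd0 i hi)
    have hkraftG : (∑ i ∈ G, ((r:ℝ) ^ (d i))⁻¹) ≤ 1 :=
      le_trans (Finset.sum_le_sum_of_subset_of_nonneg hGF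
        (fun k _ _ => by positivity)) hkraft
    by_cases hr3 : r ≤ 3
    · -- small `r`: increase all depths by one
      have hrpos : (0:ℝ) < (r:ℝ) := by linarith
      have hth3 : (1:ℝ)/3 ≤ tho q r := by
        have h1q : 1/q ≤ 1 := by
          rw [div_le_one (by linarith)]; linarith
        have hb : ((r:ℝ) ^ ((1:ℝ)/q)) ≤ 3 := by
          calc ((r:ℝ) ^ ((1:ℝ)/q)) ≤ (r:ℝ) ^ (1:ℝ) :=
                Real.rpow_le_rpow_of_exponent_le (by linarith) h1q
            _ = (r:ℝ) := Real.rpow_one _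
            _ ≤ 3 := by exact_mod_cast hr3
        have hbpos : (0:ℝ) < (r:ℝ) ^ ((1:ℝ)/q) := Real.rpow_pos_of_pos hrpos _
        have h2 : (3:ℝ)⁻¹ ≤ ((r:ℝ) ^ ((1:ℝ)/q))⁻¹ := by
          apply inv_anti₀ hbpos hb
        rw [tho, Real.rpow_neg (le_of_lt hrpos)]
        calc (1:ℝ)/3 = (3:ℝ)⁻¹ := by norm_num
          _ ≤ _ := h2
      have hkraft2 : (∑ i ∈ G, ((r:ℝ) ^ (d i + 1))⁻¹) ≤ 1/2 := by
        have hstep : ∀ i ∈ G, ((r:ℝ) ^ (d i + 1))⁻¹ = ((r:ℝ))⁻¹ * ((r:ℝ) ^ (d i))⁻¹ := by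
          intro i _
          rw [pow_succ, mul_inv, mul_comm]
        rw [Finset.sum_congr rfl hstep, ← Finset.mul_sum]
        have h1 : ((r:ℝ))⁻¹ ≤ 1/2 := by
          rw [show (1:ℝ)/2 = (2:ℝ)⁻¹ by norm_num]
          exact inv_anti₀ (by norm_num) hrR
        have hs0 : (0:ℝ) ≤ ∑ i ∈ G, ((r:ℝ) ^ (d i))⁻¹ :=
          Finset.sum_nonneg (fun i _ => by positivity)
        have h2 : (0:ℝ) < ((r:ℝ))⁻¹ := by positivity
        nlinarith [hkraftG]
      have hp := piece_le q r hq hr x G hGsupp (fun i => d i + 1) hkraft2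
      have heq : (∑ i ∈ G, |x i| * tho q r ^ (d i + 1)) = tho q r * T := by
        rw [hT, Finset.mul_sum]
        apply Finset.sum_congr rfl
        intro i _
        rw [pow_succ]
        ring
      rw [heq] at hp
      nlinarith [hth3, hT0, hp]
    · -- large `r`: split into three bins
      push_neg at hr3
      have hr4 : 4 ≤ r := by omega
      have hr4R : (4:ℝ) ≤ (r:ℝ) := by exact_mod_cast hr4
      have hw4 : ∀ i ∈ G, ((r:ℝ) ^ (d i))⁻¹ ≤ 1/4 := by
        intro i hi
        have h1 : (4:ℝ) ≤ (r:ℝ) ^ (d i) := by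
          calc (4:ℝ) ≤ (r:ℝ) := hr4R
            _ = (r:ℝ)^1 := (pow_one _).symm
            _ ≤ (r:ℝ) ^ (d i) := pow_le_pow_right₀ (by linarith) (hd1 i (hGF hi))
        rw [show (1:ℝ)/4 = (4:ℝ)⁻¹ by norm_num]
        exact inv_anti₀ (by norm_num) h1
      obtain ⟨A, B, C, hcover, hdAB, hdABC, hA, hB, hC⟩ :=
        three_bins (fun i => ((r:ℝ) ^ (d i))⁻¹) G (fun i _ => by positivity) hw4 hkraftG
      have hTsplit : T = (∑ i ∈ A, |x i| * tho q r ^ (d i))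
          + (∑ i ∈ B, |x i| * tho q r ^ (d i))
          + (∑ i ∈ C, |x i| * tho q r ^ (d i)) := by
        rw [hT, ← hcover, Finset.sum_union hdABC, Finset.sum_union hdAB]
      have hsubA : A ⊆ x.support := by
        intro k hk
        apply hGsupp
        rw [← hcover]
        exact Finset.mem_union_left _ (Finset.mem_union_left _ hk)
      have hsubB : B ⊆ x.support := by
        intro k hk
        apply hGsupp
        rw [← hcover]
        exact Finset.mem_union_left _ (Finset.mem_union_right _ hk)
      have hsubC : C ⊆ x.support := by
        intro k hk
        apply hGsupp
        rw [← hcover]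
        exact Finset.mem_union_right _ hk
      have h1 := piece_le q r hq hr x A hsubA d hA
      have h2 := piece_le q r hq hr x B hsubB d hB
      have h3 := piece_le q r hq hr x C hsubC d hC
      rw [hTsplit]
      linarith

end KeyLemma

theorem norms_three_equivalent (p q : ℝ) (hp : 1 < p) (hq : 1 < q)
    (hpq : 1 / p + 1 / q = 1) (r : ℕ) (hr : 2 ≤ r) (x : ℕ →₀ ℝ) :
    (1 / 3) * modifiedNorm q r x ≤ classicalNorm q r x ∧
      classicalNorm q r x ≤ modifiedNorm q r x := by
  constructor
  · have hμ : modifiedNorm q r x ≤ 3 * classicalNorm q r x := by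
      apply csSup_le
      · exact ⟨_, Set.mem_image_of_mem _ (single_mem_KMqr q r 0)⟩
      · rintro v ⟨y, hy, rfl⟩
        exact key_bound q r hq hr x y hy
    linarith
  · apply csSup_le_csSup (bddAbove_M q r hq hr x)
    · exact ⟨_, Set.mem_image_of_mem _ (single_mem_Kqr q r 0 1 (Or.inl rfl))⟩
    · exact Set.image_mono (Kqr_subset_KMqr q r)
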